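/- For two jointly distributed binary random variables S, V_1 that are independent with P(S=0)=P(V_1=0)=p, 1/2<p<1, and V_2 := S ⊕ V_1: given the observation V_2, we have R_∞(S|V_2) = −log p = R_∞(S), while H(S|V_2) < H(S). -/

import Mathlib

open Finset Real Filter

/-- `P` is a probability mass function on the finite set `α`. -/
def IsPMF {α : Type*} [Fintype α] (P : α → ℝ) : Prop :=
  (∀ x, 0 ≤ P x) ∧ ∑ x, P x = 1

/-- Min-entropy `R_∞(X) = - log max_x P(x)`. -/
noncomputable def minEnt {α : Type*} [Fintype α] [Nonempty α] (P : α → ℝ) : ℝ :=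
  - Real.log (⨆ x, P x)

/-- Rényi entropy of order `a`: `R_a(X) = (1/(1-a)) log Σ_x P(x)^a`. -/
noncomputable def renyiEnt {α : Type*} [Fintype α] (a : ℝ) (P : α → ℝ) : ℝ :=
  (1 / (1 - a)) * Real.log (∑ x, P x ^ a)

/-- Marginal on the first component of a joint distribution. -/
noncomputable def margX {α β : Type*} [Fintype α] [Fintype β] (P : α × β → ℝ) : α → ℝ :=
  fun x => ∑ y, P (x, y)

/-- Marginal on the second component of a joint distribution. -/
noncomputable def margY {α β : Type*} [Fintype α] [Fintype β] (P : α × β → ℝ) : β → ℝ :=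
  fun y => ∑ x, P (x, y)

/-- Average conditional min-entropy
`R_∞(X|Y) = - log Σ_y P_Y(y) max_x P_{X|Y}(x|y)`. -/
noncomputable def condMinEnt {α β : Type*} [Fintype α] [Fintype β] [Nonempty α]
    (P : α × β → ℝ) : ℝ :=
  - Real.log (∑ y, margY P y * ⨆ x, P (x, y) / margY P y)

/-- Arimoto's conditional Rényi entropy of order `a`:
`R_a(X|Y) = (a/(1-a)) log Σ_y P_Y(y) (Σ_x P_{X|Y}(x|y)^a)^(1/a)`. -/
noncomputable def condRenyiEnt {α β : Type*} [Fintype α] [Fintype β]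
    (a : ℝ) (P : α × β → ℝ) : ℝ :=
  (a / (1 - a)) *
    Real.log (∑ y, margY P y * (∑ x, (P (x, y) / margY P y) ^ a) ^ (1 / a))

/-- Shannon entropy `H(X) = - Σ_x P(x) log P(x)`. -/
noncomputable def shannonEnt {α : Type*} [Fintype α] (P : α → ℝ) : ℝ :=
  ∑ x, Real.negMulLog (P x)

/-- Conditional Shannon entropy `H(X|Y) = H(XY) - H(Y)`. -/
noncomputable def condShannonEnt {α β : Type*} [Fintype α] [Fintype β]
    (P : α × β → ℝ) : ℝ :=
  shannonEnt P - shannonEnt (margY P)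

/-- Distribution of the random variable `X : Ω → α` under the pmf `μ` on `Ω`. -/
noncomputable def dist {Ω α : Type*} [Fintype Ω] [DecidableEq α]
    (μ : Ω → ℝ) (X : Ω → α) : α → ℝ :=
  fun x => ∑ ω, if X ω = x then μ ω else 0

/-- The joint pmf of two independent bits `(S, V_1)`, each `0` with
probability `p`. -/
noncomputable def muBits (p : ℝ) : ZMod 2 × ZMod 2 → ℝ :=
  fun sv => (if sv.1 = 0 then p else 1 - p) * (if sv.2 = 0 then p else 1 - p)

lemma sum_zmod2' (f : ZMod 2 → ℝ) : ∑ x, f x = f 0 + f 1 := by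
  have h : (Finset.univ : Finset (ZMod 2)) = {0, 1} := by decide
  rw [h, Finset.sum_insert (by decide), Finset.sum_singleton]

lemma sum_prod2' (f : ZMod 2 × ZMod 2 → ℝ) :
    ∑ x, f x = f (0,0) + f (0,1) + f (1,0) + f (1,1) := by
  rw [Fintype.sum_prod_type, sum_zmod2' (fun a => ∑ y, f (a, y)), sum_zmod2', sum_zmod2']
  ring

lemma isup_zmod2' (f : ZMod 2 → ℝ) : (⨆ x, f x) = max (f 0) (f 1) := by
  apply le_antisymm
  · apply ciSup_le; intro x; fin_cases x
    · exact le_max_left _ _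
    · exact le_max_right _ _
  · apply max_le <;> exact le_ciSup (Set.Finite.bddAbove (Set.finite_range f)) _

lemma distJ' (p : ℝ) (sv : ZMod 2 × ZMod 2) :
    dist (muBits p) (fun ω => (ω.1, ω.1 + ω.2)) sv =
      (if sv.1 = 0 then p else 1 - p) * (if sv.1 + sv.2 = 0 then p else 1 - p) := by
  simp only [_root_.dist, muBits]
  rw [sum_prod2']
  have h2 : (2 : ZMod 2) = 0 := by decide
  have h3 : ((1 : ZMod 2) + 1) = 0 := by decide
  have h1 : (1 : ZMod 2) ≠ 0 := by decide
  fin_cases sv <;> simp +decide [Prod.ext_iff, h2, h3, h1]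

lemma distS' (p : ℝ) (s : ZMod 2) :
    dist (muBits p) Prod.fst s = (if s = 0 then p else 1 - p) := by
  simp only [_root_.dist, muBits]
  rw [sum_prod2']
  have h1 : (1 : ZMod 2) ≠ 0 := by decide
  rcases (show s = 0 ∨ s = 1 by revert s; decide) with rfl | rfl <;> simp [h1] <;> ring

/-- For independent binary `S, V_1` with `P(0) = p`,
`1/2 < p < 1`, and `V_2 := S ⊕ V_1`: `R_∞(S|V_2) = -log p = R_∞(S)` while
`H(S|V_2) < H(S)`. -/
theorem xor_two_case (p : ℝ) (hp : 1 / 2 < p) (hp1 : p < 1) :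
    condMinEnt (dist (muBits p) (fun ω => (ω.1, ω.1 + ω.2))) = - Real.log p ∧
    minEnt (dist (muBits p) Prod.fst) = - Real.log p ∧
    condShannonEnt (dist (muBits p) (fun ω => (ω.1, ω.1 + ω.2))) <
      shannonEnt (dist (muBits p) Prod.fst) := by
  have hb0 : 0 < 1 - p := by linarith
  have hp0 : 0 < p := by linarith
  have hb : 1 - p < p := by linarith
  set J := dist (muBits p) (fun ω : ZMod 2 × ZMod 2 => (ω.1, ω.1 + ω.2)) with hJdef
  have h1 : (1 : ZMod 2) ≠ 0 := by decide
  have h3 : ((1 : ZMod 2) + 1) = 0 := by decide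
  have J00 : J (0,0) = p * p := by rw [hJdef, distJ']; simp
  have J01 : J (0,1) = p * (1 - p) := by rw [hJdef, distJ']; simp [h1]
  have J10 : J (1,0) = (1 - p) * (1 - p) := by rw [hJdef, distJ']; simp [h1]
  have J11 : J (1,1) = (1 - p) * p := by rw [hJdef, distJ']; simp [h1, h3]
  have hm0 : margY J 0 = p * p + (1 - p) * (1 - p) := by
    rw [margY, sum_zmod2' (fun x => J (x, 0)), J00, J10]
  have hm1 : margY J 1 = p * (1 - p) + (1 - p) * p := by
    rw [margY, sum_zmod2' (fun x => J (x, 1)), J01, J11]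
  have hA0 : (0:ℝ) < p * p + (1 - p) * (1 - p) := by nlinarith
  have hB0 : (0:ℝ) < p * (1 - p) + (1 - p) * p := by nlinarith
  refine ⟨?_, ?_, ?_⟩
  · -- condMinEnt
    rw [condMinEnt, sum_zmod2']
    rw [isup_zmod2' (fun x => J (x, 0) / margY J 0),
        isup_zmod2' (fun x => J (x, 1) / margY J 1)]
    simp only [J00, J01, J10, J11, hm0, hm1]
    have hmax0 : max (p * p / (p * p + (1 - p) * (1 - p)))
        ((1 - p) * (1 - p) / (p * p + (1 - p) * (1 - p))) =
        p * p / (p * p + (1 - p) * (1 - p)) := by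
      apply max_eq_left
      gcongr
    have hmax1 : max (p * (1 - p) / (p * (1 - p) + (1 - p) * p))
        ((1 - p) * p / (p * (1 - p) + (1 - p) * p)) =
        p * (1 - p) / (p * (1 - p) + (1 - p) * p) := by
      rw [mul_comm (1 - p) p]; exact max_self _
    rw [hmax0, hmax1]
    congr 1
    field_simp
    congr 1
    ring
  · rw [minEnt]
    rw [isup_zmod2' (dist (muBits p) Prod.fst)]
    rw [distS', distS']
    simp [h1, max_eq_left hb.le]
  · rw [condShannonEnt, shannonEnt, shannonEnt, shannonEnt,
        sum_prod2' (fun sv => Real.negMulLog (J sv)),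
        sum_zmod2' (fun y => Real.negMulLog (margY J y)),
        sum_zmod2' (fun s => Real.negMulLog (dist (muBits p) Prod.fst s))]
    rw [J00, J01, J10, J11, hm0, hm1, distS', distS']
    simp only [h1, if_true, if_false, if_pos rfl, if_neg h1]
    have hsum4 : Real.negMulLog (p * p) + Real.negMulLog (p * (1 - p)) +
        Real.negMulLog ((1 - p) * (1 - p)) + Real.negMulLog ((1 - p) * p) =
        2 * (Real.negMulLog p + Real.negMulLog (1 - p)) := by
      simp only [Real.negMulLog_mul]; ring
    have hAB : Real.negMulLog (p * p + (1 - p) * (1 - p)) +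
        Real.negMulLog (p * (1 - p) + (1 - p) * p) =
        Real.binEntropy (p * p + (1 - p) * (1 - p)) := by
      rw [Real.binEntropy_eq_negMulLog_add_negMulLog_one_sub]
      congr 2; ring
    have hbp : Real.negMulLog p + Real.negMulLog (1 - p) = Real.binEntropy p :=
      (Real.binEntropy_eq_negMulLog_add_negMulLog_one_sub p).symm
    have hlt : Real.binEntropy p < Real.binEntropy (p * p + (1 - p) * (1 - p)) := by
      apply Real.binEntropy_strictAntiOn
      · constructor <;> [nlinarith; nlinarith]
      · constructor <;> [linarith [hp]; linarith]
      · nlinarith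
    linarith [hsum4, hAB, hbp, hlt]
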